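/- For n ≥ 0 let μ_n ∈ ℚ[y] be the coefficient of xⁿ in c²·(1 + y·x·c³)⁻¹ ∈ (ℚ[y])[[x]] (the moment polynomials μ_n^{(2)}(y), i.e. the row polynomials of the Riordan involution (c², -x·c³)). Then the Hankel transform det(μ_{i+j})_{0≤i,j≤n} equals (1-y)ⁿ in ℚ[y]. -/

import Mathlib

open PowerSeries Finset

namespace Stmt13Aux

noncomputable def dd (k : ℕ) : Polynomial ℚ := if k = 0 then 1 else 1 - Polynomial.X

noncomputable def aa (c u : PowerSeries (Polynomial ℚ)) (n k : ℕ) : Polynomial ℚ :=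
  if k ≤ n then PowerSeries.coeff (n - k) (c ^ (2*k+2) * u) else 0
variable {c u : PowerSeries (Polynomial ℚ)}

lemma aa_eq_zero {n k : ℕ} (h : n < k) : aa c u n k = 0 := by
  simp [aa, Nat.not_le.mpr h]

lemma seriesB (hc : c = 1 + PowerSeries.X * c ^ 2) (k : ℕ) :
    c ^ (2*(k+1)+2) * u = c ^ (2*k+2) * u + PowerSeries.X * (c ^ (2*(k+1)+2) * u)
      + PowerSeries.X * (c ^ (2*(k+1)+2) * u) + PowerSeries.X^2 * (c ^ (2*(k+2)+2) * u) := by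
  linear_combination (c ^ (2*k+2) * u * (c + 1 + PowerSeries.X * c ^ 2)) * hc

-- coefficient helpers
lemma coeff_X_mul_zero (f : PowerSeries (Polynomial ℚ)) :
    PowerSeries.coeff 0 (PowerSeries.X * f) = 0 := by
  simp [PowerSeries.coeff_zero_eq_constantCoeff]

lemma coeff_X2_mul (f : PowerSeries (Polynomial ℚ)) (n : ℕ) :
    PowerSeries.coeff (n+2) (PowerSeries.X ^ 2 * f)
      = PowerSeries.coeff n f := by
  rw [pow_two, mul_assoc, PowerSeries.coeff_succ_X_mul, PowerSeries.coeff_succ_X_mul]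

lemma coeff_X2_mul_zero (f : PowerSeries (Polynomial ℚ)) :
    PowerSeries.coeff 0 (PowerSeries.X ^ 2 * f) = 0 := by
  simp [PowerSeries.coeff_zero_eq_constantCoeff]

lemma coeff_X2_mul_one (f : PowerSeries (Polynomial ℚ)) :
    PowerSeries.coeff 1 (PowerSeries.X ^ 2 * f) = 0 := by
  rw [pow_two, mul_assoc, PowerSeries.coeff_succ_X_mul]
  simp [PowerSeries.coeff_zero_eq_constantCoeff]

lemma R2 (hc : c = 1 + PowerSeries.X * c ^ 2) (n k : ℕ) :
    aa c u (n+1) (k+1) = aa c u n k + 2 * aa c u n (k+1) + aa c u n (k+2) := by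
  rcases Nat.lt_or_ge n k with h | h
  · rw [aa_eq_zero (by omega), aa_eq_zero h, aa_eq_zero (by omega), aa_eq_zero (by omega)]
    ring
  · obtain ⟨d, rfl⟩ := Nat.exists_eq_add_of_le h
    have hB := congrArg (PowerSeries.coeff d) (seriesB (u := u) hc k)
    simp only [map_add] at hB
    match d with
    | 0 =>
      rw [coeff_X_mul_zero, coeff_X2_mul_zero] at hB
      have e1 : aa c u (k+0+1) (k+1) = PowerSeries.coeff 0 (c ^ (2*(k+1)+2) * u) := by
        simp [aa]
      have e2 : aa c u (k+0) k = PowerSeries.coeff 0 (c ^ (2*k+2) * u) := by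
        simp [aa]
      rw [e1, e2, aa_eq_zero (by omega), aa_eq_zero (by omega), hB]; ring
    | 1 =>
      rw [PowerSeries.coeff_succ_X_mul, coeff_X2_mul_one] at hB
      have e1 : aa c u (k+1+1) (k+1) = PowerSeries.coeff 1 (c ^ (2*(k+1)+2) * u) := by
        simp [aa]
      have e2 : aa c u (k+1) k = PowerSeries.coeff 1 (c ^ (2*k+2) * u) := by
        simp [aa]
      have e3 : aa c u (k+1) (k+1) = PowerSeries.coeff 0 (c ^ (2*(k+1)+2) * u) := by
        simp [aa]
      rw [e1, e2, e3, aa_eq_zero (by omega), hB]; ring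
    | (e+2) =>
      rw [PowerSeries.coeff_succ_X_mul, coeff_X2_mul] at hB
      have e1 : aa c u (k+(e+2)+1) (k+1) = PowerSeries.coeff (e+2) (c ^ (2*(k+1)+2) * u) := by
        rw [aa, if_pos (show k+1 ≤ k+(e+2)+1 by omega), show k+(e+2)+1-(k+1) = e+2 from by omega]
      have e2 : aa c u (k+(e+2)) k = PowerSeries.coeff (e+2) (c ^ (2*k+2) * u) := by
        rw [aa, if_pos (show k ≤ k+(e+2) by omega), show k+(e+2)-k = e+2 from by omega]
      have e3 : aa c u (k+(e+2)) (k+1) = PowerSeries.coeff (e+1) (c ^ (2*(k+1)+2) * u) := by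
        rw [aa, if_pos (show k+1 ≤ k+(e+2) by omega), show k+(e+2)-(k+1) = e+1 from by omega]
      have e4 : aa c u (k+(e+2)) (k+2) = PowerSeries.coeff e (c ^ (2*(k+2)+2) * u) := by
        rw [aa, if_pos (show k+2 ≤ k+(e+2) by omega), show k+(e+2)-(k+2) = e from by omega]
      rw [e1, e2, e3, e4, hB]; ring


lemma cc_u (hu : (1 + PowerSeries.C Polynomial.X * PowerSeries.X * c ^ 3) * u = 1) :
    PowerSeries.constantCoeff u = 1 := by
  have := congrArg (PowerSeries.constantCoeff) hu
  simpa using this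

lemma aa_diag (hc0 : PowerSeries.constantCoeff c = 1)
    (hu : (1 + PowerSeries.C Polynomial.X * PowerSeries.X * c ^ 3) * u = 1)
    (n : ℕ) : aa c u n n = 1 := by
  simp [aa, PowerSeries.coeff_zero_eq_constantCoeff, map_mul, map_pow, hc0, cc_u hu]

lemma aa_zero_col (m : ℕ) :
    aa c u m 0 = PowerSeries.coeff m (c ^ 2 * u) := by
  simp [aa]

lemma seriesA (hc : c = 1 + PowerSeries.X * c ^ 2)
    (hu : (1 + PowerSeries.C Polynomial.X * PowerSeries.X * c ^ 3) * u = 1) :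
    c ^ 2 * u = 1 + PowerSeries.C (2 - Polynomial.X) * (PowerSeries.X * (c ^ 2 * u))
      + PowerSeries.C (1 - Polynomial.X) * (PowerSeries.X ^ 2 * (c ^ 4 * u)) := by
  have h2 : PowerSeries.C (2 - Polynomial.X : Polynomial ℚ)
      = (2 - PowerSeries.C Polynomial.X : PowerSeries (Polynomial ℚ)) := by
    simp [map_sub, map_ofNat]
  have h1 : PowerSeries.C (1 - Polynomial.X : Polynomial ℚ)
      = (1 - PowerSeries.C Polynomial.X : PowerSeries (Polynomial ℚ)) := by
    simp [map_sub]
  rw [h1, h2]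
  linear_combination (u * ((1 - PowerSeries.C Polynomial.X) * PowerSeries.X * c ^ 2 + 1 + c)) * hc + hu

lemma R1 (hc : c = 1 + PowerSeries.X * c ^ 2)
    (hu : (1 + PowerSeries.C Polynomial.X * PowerSeries.X * c ^ 3) * u = 1)
    (n : ℕ) :
    aa c u (n+1) 0 = (2 - Polynomial.X) * aa c u n 0 + (1 - Polynomial.X) * aa c u n 1 := by
  have hA := congrArg (PowerSeries.coeff (n+1)) (seriesA hc hu)
  simp only [map_add, PowerSeries.coeff_C_mul, PowerSeries.coeff_succ_X_mul,
    PowerSeries.coeff_one, Nat.succ_ne_zero, if_false] at hA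
  match n with
  | 0 =>
    rw [coeff_X2_mul_one] at hA
    rw [aa_zero_col, aa_zero_col, aa_eq_zero (by omega), hA]
    ring
  | (m+1) =>
    rw [coeff_X2_mul] at hA
    have e1 : aa c u (m+1) 1 = PowerSeries.coeff m (c ^ 4 * u) := by
      rw [aa, if_pos (show 1 ≤ m+1 by omega), show m+1-1 = m from by omega]
    rw [aa_zero_col, aa_zero_col, e1, hA]
    ring

noncomputable def SS (c u : PowerSeries (Polynomial ℚ)) (i j N : ℕ) : Polynomial ℚ :=
  ∑ k ∈ Finset.range N, dd k * (aa c u i k * aa c u j k)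

lemma SS_symm (i j N : ℕ) : SS c u i j N = SS c u j i N :=
  Finset.sum_congr rfl fun k _ => by ring

lemma SS_trunc {i N : ℕ} (j : ℕ) (h : i + 1 ≤ N) : SS c u i j N = SS c u i j (i+1) := by
  refine (Finset.sum_subset (Finset.range_subset_range.mpr h) fun k _ hk => ?_).symm
  have hik : i < k := by simp only [Finset.mem_range] at hk; omega
  rw [aa_eq_zero hik]; ring

lemma SS_expand (hc : c = 1 + PowerSeries.X * c ^ 2)
    (hu : (1 + PowerSeries.C Polynomial.X * PowerSeries.X * c ^ 3) * u = 1)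
    (i j N : ℕ) (hiN : i + 2 ≤ N) :
    SS c u (i+1) j (N+1) =
      ((2 - Polynomial.X) * (aa c u i 0 * aa c u j 0)
        + (1 - Polynomial.X) * (aa c u i 1 * aa c u j 0 + aa c u i 0 * aa c u j 1))
      + ∑ k ∈ Finset.range N, (1 - Polynomial.X) *
          (2 * (aa c u i (k+1) * aa c u j (k+1))
            + (aa c u i (k+2) * aa c u j (k+1) + aa c u i (k+1) * aa c u j (k+2))) := by
  obtain ⟨M, rfl⟩ : ∃ M, N = M + 1 := ⟨N - 1, by omega⟩
  unfold SS
  rw [Finset.sum_range_succ']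
  have hstep : ∀ k ∈ Finset.range (M+1),
      dd (k+1) * (aa c u (i+1) (k+1) * aa c u j (k+1))
        = (1 - Polynomial.X) * (aa c u i k * aa c u j (k+1))
          + (1 - Polynomial.X) * (2 * (aa c u i (k+1) * aa c u j (k+1))
              + aa c u i (k+2) * aa c u j (k+1)) := by
    intro k _
    rw [R2 hc, show dd (k+1) = 1 - Polynomial.X from rfl]
    ring
  rw [Finset.sum_congr rfl hstep, Finset.sum_add_distrib]
  rw [Finset.sum_range_succ' (fun k => (1 - Polynomial.X) * (aa c u i k * aa c u j (k+1))) M]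
  have hz : (1 - Polynomial.X) * (aa c u i (M+1) * aa c u j (M+1+1)) = 0 := by
    rw [aa_eq_zero (show i < M + 1 by omega)]; ring
  have hext : (∑ k ∈ Finset.range M,
        (1 - Polynomial.X) * (aa c u i (k+1) * aa c u j (k+1+1)))
      = ∑ k ∈ Finset.range (M+1),
        (1 - Polynomial.X) * (aa c u i (k+1) * aa c u j (k+1+1)) := by
    rw [Finset.sum_range_succ, hz, add_zero]
  rw [hext, show dd 0 = 1 from rfl, R1 hc hu]
  have hcomb : (∑ k ∈ Finset.range (M+1),
        (1 - Polynomial.X) * (aa c u i (k+1) * aa c u j (k+1+1)))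
      + (∑ k ∈ Finset.range (M+1),
        (1 - Polynomial.X) * (2 * (aa c u i (k+1) * aa c u j (k+1))
            + aa c u i (k+2) * aa c u j (k+1)))
      = ∑ k ∈ Finset.range (M+1), (1 - Polynomial.X) *
          (2 * (aa c u i (k+1) * aa c u j (k+1))
            + (aa c u i (k+2) * aa c u j (k+1) + aa c u i (k+1) * aa c u j (k+2))) := by
    rw [← Finset.sum_add_distrib]
    exact Finset.sum_congr rfl fun k _ => by ring
  linear_combination hcomb

lemma SS_key (hc : c = 1 + PowerSeries.X * c ^ 2)
    (hu : (1 + PowerSeries.C Polynomial.X * PowerSeries.X * c ^ 3) * u = 1)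
    (i j N : ℕ) (hi : i + 2 ≤ N) (hj : j + 2 ≤ N) :
    SS c u (i+1) j (N+1) = SS c u (j+1) i (N+1) := by
  rw [SS_expand hc hu i j N hi, SS_expand hc hu j i N hj]
  refine congrArg₂ (· + ·) ?_ ?_
  · ring
  · exact Finset.sum_congr rfl fun k _ => by ring

lemma SS_main (hc0 : PowerSeries.constantCoeff c = 1)
    (hc : c = 1 + PowerSeries.X * c ^ 2)
    (hu : (1 + PowerSeries.C Polynomial.X * PowerSeries.X * c ^ 3) * u = 1) :
    ∀ i j : ℕ, SS c u i j (i+j+2) = aa c u (i+j) 0 := by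
  intro i
  induction i with
  | zero =>
    intro j
    unfold SS
    rw [Finset.sum_eq_single 0]
    · rw [show dd 0 = 1 from rfl, aa_diag hc0 hu]
      simp
    · intro k _ hk
      rw [aa_eq_zero (show 0 < k by omega)]
      ring
    · intro h
      exact absurd (Finset.mem_range.mpr (by omega)) h
  | succ i IH =>
    intro j
    rw [show i+1+j+2 = (i+j+2)+1 from by omega]
    rw [SS_key hc hu i j (i+j+2) (by omega) (by omega), SS_symm]
    rw [show i+j+2+1 = i+(j+1)+2 from by omega, IH (j+1),
      show i+(j+1) = i+1+j from by omega]

end Stmt13Aux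

open Stmt13Aux in
/-- The Hankel transform of the moment polynomials `μ_n^{(2)}(y)`, the
coefficients of `c²·(1+yxc³)⁻¹`, equals `(1-y)ⁿ` in `ℚ[y]`. -/
theorem stmt13 (c : PowerSeries (Polynomial ℚ))
    (hc0 : PowerSeries.constantCoeff c = 1)
    (hc : c = 1 + PowerSeries.X * c ^ 2)
    (u : PowerSeries (Polynomial ℚ))
    (hu : (1 + PowerSeries.C Polynomial.X * PowerSeries.X * c ^ 3) * u = 1)
    (μ : ℕ → Polynomial ℚ)
    (hμ : ∀ n : ℕ, μ n = PowerSeries.coeff n (c ^ 2 * u)) :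
    ∀ n : ℕ,
      (Matrix.of fun i j : Fin (n + 1) => μ ((i : ℕ) + (j : ℕ))).det =
        (1 - Polynomial.X : Polynomial ℚ) ^ n := by
  intro n
  classical
  set L : Matrix (Fin (n+1)) (Fin (n+1)) (Polynomial ℚ) :=
    Matrix.of fun i k : Fin (n+1) => aa c u (i : ℕ) (k : ℕ) with hL
  set D : Matrix (Fin (n+1)) (Fin (n+1)) (Polynomial ℚ) :=
    Matrix.diagonal fun k : Fin (n+1) => dd (k : ℕ) with hD
  have hM : (Matrix.of fun i j : Fin (n + 1) => μ ((i : ℕ) + (j : ℕ))) = L * D * L.transpose := by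
    ext i j
    have h1 : μ ((i : ℕ) + (j : ℕ)) = SS c u (i : ℕ) (j : ℕ) ((i : ℕ) + (j : ℕ) + 2) := by
      rw [hμ, ← aa_zero_col, SS_main hc0 hc hu]
    have h2 : SS c u (i : ℕ) (j : ℕ) ((i : ℕ) + (j : ℕ) + 2) = SS c u (i : ℕ) (j : ℕ) (n+1) := by
      rw [SS_trunc (j : ℕ) (show (i : ℕ) + 1 ≤ (i : ℕ) + (j : ℕ) + 2 by omega),
        SS_trunc (j : ℕ) (show (i : ℕ) + 1 ≤ n + 1 by omega)]
    have h3 : (L * D * L.transpose) i j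
        = ∑ k : Fin (n+1), dd (k : ℕ) * (aa c u (i : ℕ) (k : ℕ) * aa c u (j : ℕ) (k : ℕ)) := by
      rw [Matrix.mul_apply]
      refine Finset.sum_congr rfl fun k _ => ?_
      rw [hD, Matrix.mul_diagonal, Matrix.transpose_apply, hL, Matrix.of_apply, Matrix.of_apply]
      ring
    rw [Matrix.of_apply, h1, h2, h3, SS,
      ← Fin.sum_univ_eq_sum_range
        (fun k => dd k * (aa c u (i : ℕ) (k : ℕ) * aa c u (j : ℕ) k)) (n+1)]
  rw [hM, Matrix.det_mul, Matrix.det_mul, Matrix.det_transpose]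
  have hLtri : L.BlockTriangular OrderDual.toDual := by
    intro i j hij
    exact aa_eq_zero (show (i : ℕ) < (j : ℕ) from hij)
  have hdetL : L.det = 1 := by
    rw [Matrix.det_of_lowerTriangular L hLtri]
    exact Finset.prod_eq_one fun i _ => aa_diag hc0 hu _
  have hdetD : D.det = (1 - Polynomial.X : Polynomial ℚ) ^ n := by
    rw [hD, Matrix.det_diagonal, Fin.prod_univ_succ]
    simp [dd, Finset.prod_const]
  rw [hdetL, hdetD, one_mul, mul_one]
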